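/- arXiv:1007.3234 — 3 statements merged into one kernel-verified Lean document; each statement's English description precedes it below -/
import Mathlib

section
/- Let H be a Hilbert space and {P_γ}_{γ∈Γ} a Riesz basis of two-dimensional projections (i.e. P_γ = A Q_γ A⁻¹ for an isomorphism A and orthogonal projections Q_γ forming a basis of projections). Suppose for each γ, f_γ and g_γ are linearly independent unit vectors in the range of P_γ. Then the system {f_γ, g_γ : γ ∈ Γ} is a Riesz basis of H if and only if sup_{γ∈Γ} |⟨f_γ, g_γ⟩| < 1. -/
open scoped ComplexInnerProductSpace

/-- A family of bounded projections is a *basis of projections* if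
`P_α P_β = 0` for `α ≠ β` and `x = Σ_γ P_γ x` for every `x`. -/
def IsBasisOfProjections {H : Type*} [NormedAddCommGroup H] [InnerProductSpace ℂ H]
    {Γ : Type*} (P : Γ → H →L[ℂ] H) : Prop :=
  (∀ γ x, P γ (P γ x) = P γ x) ∧
  (∀ α β, α ≠ β → ∀ x, P α (P β x) = 0) ∧
  (∀ x, HasSum (fun γ => P γ x) x)

/-- A *Riesz basis of projections*: `P_γ = A Q_γ A⁻¹` for an isomorphism `A`
and a basis of orthogonal (self-adjoint) projections `Q_γ`. -/
def IsRieszBasisOfProjections {H : Type*} [NormedAddCommGroup H] [InnerProductSpace ℂ H]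
    [CompleteSpace H] {Γ : Type*} (P : Γ → H →L[ℂ] H) : Prop :=
  ∃ (A : H ≃L[ℂ] H) (Q : Γ → H →L[ℂ] H),
    IsBasisOfProjections Q ∧ (∀ γ, IsSelfAdjoint (Q γ)) ∧
    (∀ γ x, P γ x = A (Q γ (A.symm x)))

/-- A system of vectors is a *Riesz basis* if it is the image of an
orthonormal (Hilbert) basis under an isomorphism of `H`. -/
def IsRieszBasisVectors {H : Type*} [NormedAddCommGroup H] [InnerProductSpace ℂ H]
    [CompleteSpace H] {I : Type*} (f : I → H) : Prop :=
  ∃ (A : H ≃L[ℂ] H) (e : HilbertBasis I ℂ H), ∀ i, f i = A (e i)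

set_option linter.unusedSectionVars false
set_option linter.unusedVariables false

section Aux

variable {H : Type*} [NormedAddCommGroup H] [InnerProductSpace ℂ H] [CompleteSpace H]

theorem parseval_aux {ι : Type*} (v : ι → H) (ho : Orthonormal ℂ v)
    (hsp : ⊤ ≤ (Submodule.span ℂ (Set.range v)).topologicalClosure) (x : H) :
    HasSum (fun i => ‖(⟪v i, x⟫ : ℂ)‖^2) (‖x‖^2) := by
  set W : HilbertBasis ι ℂ H := HilbertBasis.mk ho hsp
  have hW : ∀ i, W i = v i := fun i => congrFun (HilbertBasis.coe_mk ho hsp) i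
  have h := W.hasSum_inner_mul_inner x x
  have h2 := h.mapL Complex.reCLM
  have heq : (fun i => Complex.reCLM (⟪x, W i⟫ * ⟪W i, x⟫)) = fun i => ‖(⟪v i, x⟫ : ℂ)‖^2 := by
    funext i
    rw [hW, ← inner_conj_symm]
    simp only [Complex.reCLM_apply, mul_comm, Complex.mul_conj']
    norm_cast
  rw [heq] at h2
  have h3 : Complex.reCLM ⟪x, x⟫ = ‖x‖^2 := by
    simpa using inner_self_eq_norm_sq (𝕜 := ℂ) x
  rwa [h3] at h2

theorem hasSum_sum_elim_aux {M : Type*} [AddCommMonoid M] [TopologicalSpace M] [ContinuousAdd M]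
    {β γ : Type*} {F : β ⊕ γ → M} {a b : M}
    (h1 : HasSum (fun x => F (Sum.inl x)) a) (h2 : HasSum (fun x => F (Sum.inr x)) b) :
    HasSum F (a + b) := by
  have e1 : HasSum (F ∘ (↑) : Set.range (Sum.inl : β → β ⊕ γ) → M) a :=
    (Sum.inl_injective.hasSum_range_iff).mpr h1
  have e2 : HasSum (F ∘ (↑) : Set.range (Sum.inr : γ → β ⊕ γ) → M) b :=
    (Sum.inr_injective.hasSum_range_iff).mpr h2
  exact e1.add_isCompl Set.isCompl_range_inl_range_inr e2

theorem exists_on_system {Γ : Type*} (V : Γ → Submodule ℂ H)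
    (hfd : ∀ γ, FiniteDimensional ℂ (V γ))
    (hdim2 : ∀ γ, Module.finrank ℂ (V γ) = 2)
    (hortho : OrthogonalFamily ℂ (fun γ => V γ) (fun γ => (V γ).subtypeₗᵢ)) :
    ∃ w : Γ ⊕ Γ → H, Orthonormal ℂ w ∧ (∀ γ, w (Sum.inl γ) ∈ V γ) ∧
      (∀ γ, w (Sum.inr γ) ∈ V γ) ∧ (∀ γ, V γ ≤ Submodule.span ℂ (Set.range w)) := by
  classical
  haveI := hfd
  let b : ∀ γ, OrthonormalBasis (Fin 2) ℂ (V γ) := fun γ =>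
    (stdOrthonormalBasis ℂ (V γ)).reindex (finCongr (hdim2 γ))
  refine ⟨Sum.elim (fun γ => (b γ 0 : H)) (fun γ => (b γ 1 : H)), ?_, fun γ => (b γ 0).2,
    fun γ => (b γ 1).2, ?_⟩
  · rw [orthonormal_iff_ite]
    have hb : ∀ γ (i j : Fin 2), (⟪(b γ i : H), (b γ j : H)⟫ : ℂ) = if i = j then 1 else 0 := by
      intro γ i j
      have := orthonormal_iff_ite.mp (b γ).orthonormal i j
      rwa [Submodule.coe_inner] at this
    rintro (γ₁ | γ₁) (γ₂ | γ₂)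
    · by_cases h : γ₁ = γ₂
      · subst h; simpa using hb γ₁ 0 0
      · simpa [h] using hortho h (b γ₁ 0) (b γ₂ 0)
    · by_cases h : γ₁ = γ₂
      · subst h; simpa using hb γ₁ 0 1
      · simpa [h] using hortho h (b γ₁ 0) (b γ₂ 1)
    · by_cases h : γ₁ = γ₂
      · subst h; simpa using hb γ₁ 1 0
      · simpa [h] using hortho h (b γ₁ 1) (b γ₂ 0)
    · by_cases h : γ₁ = γ₂
      · subst h; simpa using hb γ₁ 1 1
      · simpa [h] using hortho h (b γ₁ 1) (b γ₂ 1)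
  · intro γ y hy
    set w : Γ ⊕ Γ → H := Sum.elim (fun γ => (b γ 0 : H)) (fun γ => (b γ 1 : H)) with hwdef
    have hrep := (b γ).sum_repr ⟨y, hy⟩
    have hco : (((b γ).repr ⟨y, hy⟩ 0 • (b γ) 0 + (b γ).repr ⟨y, hy⟩ 1 • (b γ) 1 : V γ) : H) = y := by
      rw [show ((b γ).repr ⟨y, hy⟩ 0 • (b γ) 0 + (b γ).repr ⟨y, hy⟩ 1 • (b γ) 1 : V γ)
          = ⟨y, hy⟩ from by simpa [Fin.sum_univ_two] using hrep]
    have hmem : (((b γ).repr ⟨y, hy⟩ 0 • (b γ) 0 + (b γ).repr ⟨y, hy⟩ 1 • (b γ) 1 : V γ) : H)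
        ∈ Submodule.span ℂ (Set.range w) := by
      simp only [Submodule.coe_add, SetLike.val_smul]
      exact Submodule.add_mem _
        (Submodule.smul_mem _ _ (Submodule.subset_span ⟨Sum.inl γ, rfl⟩))
        (Submodule.smul_mem _ _ (Submodule.subset_span ⟨Sum.inr γ, rfl⟩))
    rwa [hco] at hmem

set_option maxHeartbeats 1000000 in
theorem aux_construct {Γ : Type*} (V : Γ → Submodule ℂ H)
    (hfd : ∀ γ, FiniteDimensional ℂ (V γ))
    (hdim2 : ∀ γ, Module.finrank ℂ (V γ) = 2)
    (hortho : OrthogonalFamily ℂ (fun γ => V γ) (fun γ => (V γ).subtypeₗᵢ))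
    (u v : Γ → H) (hu : ∀ γ, u γ ∈ V γ) (hv : ∀ γ, v γ ∈ V γ)
    (hdense : ⊤ ≤ (Submodule.span ℂ (Set.range (Sum.elim u v))).topologicalClosure)
    (Cb ca cb2 : ℝ) (hCb : 0 ≤ Cb) (hca : 0 < ca) (hcb2 : 0 ≤ cb2)
    (hupper : ∀ γ (c d : ℂ), ‖c • u γ + d • v γ‖^2 ≤ Cb * (‖c‖^2 + ‖d‖^2))
    (hlower : ∀ γ (c d : ℂ), ca * (‖c‖^2 + ‖d‖^2) ≤ cb2 * ‖c • u γ + d • v γ‖^2) :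
    IsRieszBasisVectors (Sum.elim u v) := by
  classical
  obtain ⟨w, horthw, hwl, hwr, hVle⟩ := exists_on_system V hfd hdim2 hortho
  have hspanw : ⊤ ≤ (Submodule.span ℂ (Set.range w)).topologicalClosure := by
    refine le_trans hdense (Submodule.topologicalClosure_mono ?_)
    rw [Submodule.span_le]
    rintro y ⟨i, rfl⟩
    cases i with
    | inl γ => exact hVle γ (hu γ)
    | inr γ => exact hVle γ (hv γ)
  have hpar : ∀ x : H, HasSum (fun i : Γ ⊕ Γ => ‖(⟪w i, x⟫ : ℂ)‖^2) (‖x‖^2) :=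
    parseval_aux w horthw hspanw
  have hcoordsum : ∀ x : H, HasSum
      (fun γ => ‖(⟪w (Sum.inl γ), x⟫ : ℂ)‖^2 + ‖(⟪w (Sum.inr γ), x⟫ : ℂ)‖^2) (‖x‖^2) := by
    intro x
    have hsummable := (hpar x).summable
    have h1 : Summable (fun γ => ‖(⟪w (Sum.inl γ), x⟫ : ℂ)‖^2) :=
      hsummable.comp_injective Sum.inl_injective
    have h2 : Summable (fun γ => ‖(⟪w (Sum.inr γ), x⟫ : ℂ)‖^2) :=
      hsummable.comp_injective Sum.inr_injective
    have h3 := hasSum_sum_elim_aux (F := fun i : Γ ⊕ Γ => ‖(⟪w i, x⟫ : ℂ)‖^2) h1.hasSum h2.hasSum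
    have h4 := (hpar x).unique h3
    rw [h4]
    exact h1.hasSum.add h2.hasSum
  let τ : H → ∀ γ, V γ := fun x γ =>
    ⟨⟪w (Sum.inl γ), x⟫ • u γ + ⟪w (Sum.inr γ), x⟫ • v γ,
      Submodule.add_mem _ (Submodule.smul_mem _ _ (hu γ)) (Submodule.smul_mem _ _ (hv γ))⟩
  have hτupper : ∀ x γ, ‖τ x γ‖^2 ≤
      Cb * (‖(⟪w (Sum.inl γ), x⟫ : ℂ)‖^2 + ‖(⟪w (Sum.inr γ), x⟫ : ℂ)‖^2) :=
    fun x γ => hupper γ _ _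
  have hτlower : ∀ x γ,
      ca * (‖(⟪w (Sum.inl γ), x⟫ : ℂ)‖^2 + ‖(⟪w (Sum.inr γ), x⟫ : ℂ)‖^2) ≤ cb2 * ‖τ x γ‖^2 :=
    fun x γ => hlower γ _ _
  have hτsummable : ∀ x : H, Summable (fun γ => ((τ x γ : H))) := by
    intro x
    have hsq : Summable (fun γ => ‖τ x γ‖^2) :=
      Summable.of_nonneg_of_le (fun γ => by positivity) (hτupper x)
        (((hcoordsum x).summable).mul_left Cb)
    have h2 := (hortho.summable_iff_norm_sq_summable (τ x)).mpr hsq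
    simpa only [Submodule.coe_subtypeₗᵢ, Submodule.coe_subtype] using h2
  have hτhassum : ∀ x : H, HasSum (fun γ => ‖τ x γ‖^2) (‖∑' γ, ((τ x γ : H))‖^2) := by
    intro x
    have hs' : Filter.Tendsto (fun s : Finset Γ => ∑ γ ∈ s, ((τ x γ : H))) Filter.atTop
        (nhds (∑' γ, ((τ x γ : H)))) := (hτsummable x).hasSum
    have ht := ((continuous_norm.pow 2).tendsto _).comp hs'
    have heq : ∀ s : Finset Γ, ‖∑ γ ∈ s, ((τ x γ : H))‖^2 = ∑ γ ∈ s, ‖τ x γ‖^2 := by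
      intro s
      have := hortho.norm_sum (τ x) s
      simpa only [Submodule.coe_subtypeₗᵢ, Submodule.coe_subtype] using this
    exact (ht.congr heq)
  have hub : ∀ x : H, ‖∑' γ, ((τ x γ : H))‖^2 ≤ Cb * ‖x‖^2 := fun x =>
    hasSum_le (hτupper x) (hτhassum x) ((hcoordsum x).mul_left Cb)
  have hlb : ∀ x : H, ca * ‖x‖^2 ≤ cb2 * ‖∑' γ, ((τ x γ : H))‖^2 := fun x =>
    hasSum_le (hτlower x) ((hcoordsum x).mul_left ca) ((hτhassum x).mul_left cb2)
  let C₀ : H →ₗ[ℂ] H :=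
    { toFun := fun x => ∑' γ, ((τ x γ : H))
      map_add' := by
        intro x y
        have hadd : ∀ γ, ((τ (x + y) γ : H)) = ((τ x γ : H)) + ((τ y γ : H)) := by
          intro γ
          show (⟪w (Sum.inl γ), x + y⟫ : ℂ) • u γ + (⟪w (Sum.inr γ), x + y⟫ : ℂ) • v γ =
            ((⟪w (Sum.inl γ), x⟫ : ℂ) • u γ + (⟪w (Sum.inr γ), x⟫ : ℂ) • v γ) +
            ((⟪w (Sum.inl γ), y⟫ : ℂ) • u γ + (⟪w (Sum.inr γ), y⟫ : ℂ) • v γ)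
          simp only [inner_add_right, add_smul]
          abel
        show ∑' γ, ((τ (x + y) γ : H)) = ∑' γ, ((τ x γ : H)) + ∑' γ, ((τ y γ : H))
        rw [tsum_congr hadd, Summable.tsum_add (hτsummable x) (hτsummable y)]
      map_smul' := by
        intro c x
        have hsmul : ∀ γ, ((τ (c • x) γ : H)) = c • ((τ x γ : H)) := by
          intro γ
          show (⟪w (Sum.inl γ), c • x⟫ : ℂ) • u γ + (⟪w (Sum.inr γ), c • x⟫ : ℂ) • v γ =
            c • ((⟪w (Sum.inl γ), x⟫ : ℂ) • u γ + (⟪w (Sum.inr γ), x⟫ : ℂ) • v γ)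
          simp only [inner_smul_right, smul_add, smul_smul]
        show ∑' γ, ((τ (c • x) γ : H)) = c • ∑' γ, ((τ x γ : H))
        rw [tsum_congr hsmul]
        exact ((hτsummable x).hasSum.const_smul c).tsum_eq }
  have hC₀ : ∀ x, ‖C₀ x‖ ≤ Real.sqrt Cb * ‖x‖ := by
    intro x
    have h := hub x
    have h1 : ‖C₀ x‖ = Real.sqrt (‖C₀ x‖^2) := (Real.sqrt_sq (norm_nonneg _)).symm
    rw [h1]
    calc Real.sqrt (‖C₀ x‖^2) ≤ Real.sqrt (Cb * ‖x‖^2) := Real.sqrt_le_sqrt h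
      _ = Real.sqrt Cb * ‖x‖ := by rw [Real.sqrt_mul hCb, Real.sqrt_sq (norm_nonneg _)]
  let C : H →L[ℂ] H := C₀.mkContinuous (Real.sqrt Cb) hC₀
  have hCapp : ∀ x, C x = ∑' γ, ((τ x γ : H)) := fun _ => rfl
  have hite := orthonormal_iff_ite.mp horthw
  have hCw : ∀ i, C (w i) = Sum.elim u v i := by
    intro i
    cases i with
    | inl γ₀ =>
      rw [hCapp, tsum_eq_single γ₀ ?_]
      · show (⟪w (Sum.inl γ₀), w (Sum.inl γ₀)⟫ : ℂ) • u γ₀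
            + (⟪w (Sum.inr γ₀), w (Sum.inl γ₀)⟫ : ℂ) • v γ₀ = _
        rw [hite, hite]
        simp
      · intro γ hγ
        show (⟪w (Sum.inl γ), w (Sum.inl γ₀)⟫ : ℂ) • u γ
            + (⟪w (Sum.inr γ), w (Sum.inl γ₀)⟫ : ℂ) • v γ = 0
        rw [hite, hite]
        simp [hγ]
    | inr γ₀ =>
      rw [hCapp, tsum_eq_single γ₀ ?_]
      · show (⟪w (Sum.inl γ₀), w (Sum.inr γ₀)⟫ : ℂ) • u γ₀
            + (⟪w (Sum.inr γ₀), w (Sum.inr γ₀)⟫ : ℂ) • v γ₀ = _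
        rw [hite, hite]
        simp
      · intro γ hγ
        show (⟪w (Sum.inl γ), w (Sum.inr γ₀)⟫ : ℂ) • u γ
            + (⟪w (Sum.inr γ), w (Sum.inr γ₀)⟫ : ℂ) • v γ = 0
        rw [hite, hite]
        simp [hγ]
  have hanti : ∀ x : H, ‖x‖ ≤ Real.sqrt (cb2 / ca) * ‖C x‖ := by
    intro x
    have h := hlb x
    have h2 : ‖x‖^2 ≤ (cb2 / ca) * ‖C x‖^2 := by
      rw [div_mul_eq_mul_div, le_div_iff₀ hca]
      calc ‖x‖^2 * ca = ca * ‖x‖^2 := mul_comm _ _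
        _ ≤ cb2 * ‖∑' γ, ((τ x γ : H))‖^2 := h
        _ = cb2 * ‖C x‖^2 := by rw [← hCapp]
    calc ‖x‖ = Real.sqrt (‖x‖^2) := (Real.sqrt_sq (norm_nonneg _)).symm
      _ ≤ Real.sqrt ((cb2 / ca) * ‖C x‖^2) := Real.sqrt_le_sqrt h2
      _ = Real.sqrt (cb2 / ca) * ‖C x‖ := by
          rw [Real.sqrt_mul (by positivity), Real.sqrt_sq (norm_nonneg _)]
  have hK : AntilipschitzWith (Real.toNNReal (Real.sqrt (cb2 / ca))) C :=
    C.antilipschitz_of_bound (fun x => by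
      rw [Real.coe_toNNReal _ (Real.sqrt_nonneg _)]
      exact hanti x)
  have hker : LinearMap.ker (C : H →ₗ[ℂ] H) = ⊥ := by
    rw [LinearMap.ker_eq_bot']
    intro x hx
    have h := hanti x
    rw [show C x = 0 from hx] at h
    simp only [norm_zero, mul_zero] at h
    exact norm_le_zero_iff.mp h
  have hclosed : IsClosed (Set.range C) := hK.isClosed_range C.uniformContinuous
  have hrange : LinearMap.range (C : H →ₗ[ℂ] H) = ⊤ := by
    rw [eq_top_iff]
    have hsub : Submodule.span ℂ (Set.range (Sum.elim u v)) ≤ LinearMap.range (C : H →ₗ[ℂ] H) := by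
      rw [Submodule.span_le]
      rintro y ⟨i, rfl⟩
      exact ⟨w i, hCw i⟩
    refine le_trans hdense (Submodule.topologicalClosure_minimal _ hsub ?_)
    rwa [LinearMap.coe_range]
  refine ⟨ContinuousLinearEquiv.ofBijective C hker hrange, HilbertBasis.mk horthw hspanw, ?_⟩
  intro i
  have h1 : (HilbertBasis.mk horthw hspanw) i = w i := congrFun (HilbertBasis.coe_mk _ _) i
  have h2 : (ContinuousLinearEquiv.ofBijective C hker hrange) (w i) = C (w i) := rfl
  rw [h1, h2, hCw i]

theorem forward_dir {Γ : Type*}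
    (f g : Γ → H)
    (hf : ∀ γ, ‖f γ‖ = 1) (hg : ∀ γ, ‖g γ‖ = 1)
    (hRB : IsRieszBasisVectors (Sum.elim f g)) :
    ∃ κ : ℝ, κ < 1 ∧ ∀ γ, ‖(inner ℂ (f γ) (g γ) : ℂ)‖ ≤ κ := by
  obtain ⟨B, e, he⟩ := hRB
  rcases isEmpty_or_nonempty Γ with hΓ | hΓ
  · exact ⟨0, by norm_num, fun γ => (IsEmpty.false γ).elim⟩
  set K : ℝ := ‖(B.symm : H →L[ℂ] H)‖ with hKdef
  have horth := e.orthonormal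
  have hBsymm : ∀ i, B.symm (Sum.elim f g i) = e i := by
    intro i; rw [he i]; exact B.symm_apply_apply _
  have hK1 : 1 ≤ K := by
    obtain ⟨γ⟩ := hΓ
    have h1 : B.symm (f γ) = e (Sum.inl γ) := hBsymm (Sum.inl γ)
    have h2 : ‖e (Sum.inl γ)‖ = 1 := horth.1 _
    have h3 : ‖B.symm (f γ)‖ ≤ K * ‖f γ‖ := (B.symm : H →L[ℂ] H).le_opNorm _
    rw [h1, h2, hf γ, mul_one] at h3
    exact h3
  have hK2 : (0:ℝ) < K^2 := by positivity
  have h00 : 0 < 1/K^2 := by positivity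
  refine ⟨1 - 1/K^2, by linarith, fun γ => ?_⟩
  set t : ℂ := ⟪f γ, g γ⟫ with htdef
  by_cases ht0 : t = 0
  · rw [ht0]
    simp only [norm_zero]
    rw [le_sub_iff_add_le, zero_add, div_le_one hK2]
    nlinarith
  -- choose a unimodular z with z * t = ‖t‖
  set z : ℂ := (‖t‖ : ℂ) / t with hzdef
  have hzt : z * t = (‖t‖ : ℂ) := by
    rw [hzdef]; exact div_mul_cancel₀ _ ht0
  have hz1 : ‖z‖ = 1 := by
    rw [hzdef, norm_div, Complex.norm_real, norm_norm, div_self (norm_ne_zero_iff.mpr ht0)]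
  have hij : (Sum.inl γ : Γ ⊕ Γ) ≠ Sum.inr γ := Sum.inl_ne_inr
  have hleft : ‖e (Sum.inl γ) - z • e (Sum.inr γ)‖^2 = 2 := by
    rw [norm_sub_sq (𝕜 := ℂ), inner_smul_right, horth.2 hij, mul_zero, norm_smul,
      horth.1, horth.1, hz1]
    norm_num
  have hright : ‖f γ - z • g γ‖^2 = 2 - 2 * ‖t‖ := by
    rw [norm_sub_sq (𝕜 := ℂ), inner_smul_right, ← htdef, hzt, norm_smul, hf γ, hg γ, hz1]
    simp [Complex.ofReal_re]
    ring
  have htrans : B.symm (f γ - z • g γ) = e (Sum.inl γ) - z • e (Sum.inr γ) := by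
    rw [map_sub, map_smul, show f γ = Sum.elim f g (Sum.inl γ) from rfl,
      show g γ = Sum.elim f g (Sum.inr γ) from rfl, hBsymm, hBsymm]
  have hb : ‖B.symm (f γ - z • g γ)‖ ≤ K * ‖f γ - z • g γ‖ :=
    (B.symm : H →L[ℂ] H).le_opNorm _
  rw [htrans] at hb
  have hsq : 2 ≤ K^2 * (2 - 2*‖t‖) := by
    have h1 : ‖e (Sum.inl γ) - z • e (Sum.inr γ)‖^2 ≤ (K * ‖f γ - z • g γ‖)^2 :=
      pow_le_pow_left₀ (norm_nonneg _) hb 2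
    rw [hleft, mul_pow, hright] at h1
    exact h1
  have h4 : 1/K^2 ≤ 1 - ‖t‖ := by
    rw [div_le_iff₀ hK2]
    nlinarith
  linarith

theorem backward_dir {Γ : Type*}
    (A : H ≃L[ℂ] H) (Q : Γ → H →L[ℂ] H)
    (hQidem : ∀ γ x, Q γ (Q γ x) = Q γ x)
    (hQzero : ∀ α β, α ≠ β → ∀ x, Q α (Q β x) = 0)
    (hQsum : ∀ x, HasSum (fun γ => Q γ x) x)
    (hQsa : ∀ γ, IsSelfAdjoint (Q γ))
    (P : Γ → H →L[ℂ] H)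
    (hPAQ : ∀ γ x, P γ x = A (Q γ (A.symm x)))
    (hdim : ∀ γ, Module.finrank ℂ (LinearMap.range (P γ).toLinearMap) = 2)
    (f g : Γ → H)
    (hf : ∀ γ, ‖f γ‖ = 1) (hg : ∀ γ, ‖g γ‖ = 1)
    (hli : ∀ γ, LinearIndependent ℂ ![f γ, g γ])
    (hfr : ∀ γ, f γ ∈ LinearMap.range (P γ).toLinearMap)
    (hgr : ∀ γ, g γ ∈ LinearMap.range (P γ).toLinearMap)
    (κ : ℝ) (hκ1 : κ < 1) (hκb : ∀ γ, ‖(inner ℂ (f γ) (g γ) : ℂ)‖ ≤ κ) :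
    IsRieszBasisVectors (Sum.elim f g) := by
  classical
  set κ' : ℝ := max κ 0 with hκ'def
  have hκ'0 : 0 ≤ κ' := le_max_right _ _
  have hκ'1 : κ' < 1 := max_lt hκ1 one_pos
  have hbound : ∀ γ, ‖(⟪f γ, g γ⟫ : ℂ)‖ ≤ κ' := fun γ => (hκb γ).trans (le_max_left _ _)
  set V : Γ → Submodule ℂ H := fun γ => LinearMap.range (Q γ).toLinearMap with hVdef
  have hmemV : ∀ γ x, Q γ x ∈ V γ := fun γ x => ⟨x, rfl⟩
  have hfix : ∀ γ, ∀ y ∈ V γ, Q γ y = y := by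
    rintro γ y ⟨x, rfl⟩
    exact hQidem γ x
  have hsymm : ∀ γ (x y : H), (⟪Q γ x, y⟫ : ℂ) = ⟪x, Q γ y⟫ := fun γ => (hQsa γ).isSymmetric
  have hortho : OrthogonalFamily ℂ (fun γ => V γ) (fun γ => (V γ).subtypeₗᵢ) := by
    intro α β hne x y
    have hx : Q α (x : H) = x := hfix α x x.2
    have hy : Q β (y : H) = y := hfix β y y.2
    have : (⟪(x : H), (y : H)⟫ : ℂ) = 0 := by
      calc (⟪(x : H), (y : H)⟫ : ℂ) = ⟪Q α (x : H), Q β (y : H)⟫ := by rw [hx, hy]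
        _ = ⟪(x : H), Q α (Q β (y : H))⟫ := hsymm α _ _
        _ = 0 := by rw [hQzero α β hne]; exact inner_zero_right _
    simpa using this
  -- image description of ranges
  have hPrange : ∀ γ, LinearMap.range (P γ).toLinearMap
      = Submodule.map (A.toLinearEquiv : H →ₗ[ℂ] H) (V γ) := by
    intro γ
    apply le_antisymm
    · rintro y ⟨x, rfl⟩
      exact ⟨Q γ (A.symm x), hmemV γ _, (hPAQ γ x).symm⟩
    · rintro y ⟨z, ⟨x, rfl⟩, rfl⟩
      refine ⟨A ((Q γ).toLinearMap x), ?_⟩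
      show P γ (A ((Q γ).toLinearMap x)) = _
      rw [hPAQ γ]
      simp [hQidem γ x]
  have hdimV : ∀ γ, Module.finrank ℂ (V γ) = 2 := by
    intro γ
    have h := hdim γ
    rw [hPrange γ, LinearEquiv.finrank_map_eq] at h
    exact h
  have hfdV : ∀ γ, FiniteDimensional ℂ (V γ) := fun γ =>
    FiniteDimensional.of_finrank_pos (by rw [hdimV γ]; norm_num)
  -- transported vectors
  set u : Γ → H := fun γ => A.symm (f γ) with hudef
  set v : Γ → H := fun γ => A.symm (g γ) with hvdef
  have huV : ∀ γ, u γ ∈ V γ := by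
    intro γ
    obtain ⟨x, hx⟩ := hfr γ
    have hx' : P γ x = f γ := hx
    have : u γ = Q γ (A.symm x) := by
      rw [hudef]
      simp only
      rw [← hx', hPAQ γ x, ContinuousLinearEquiv.symm_apply_apply]
    rw [this]
    exact hmemV γ _
  have hvV : ∀ γ, v γ ∈ V γ := by
    intro γ
    obtain ⟨x, hx⟩ := hgr γ
    have hx' : P γ x = g γ := hx
    have : v γ = Q γ (A.symm x) := by
      rw [hvdef]
      simp only
      rw [← hx', hPAQ γ x, ContinuousLinearEquiv.symm_apply_apply]
    rw [this]
    exact hmemV γ _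
  -- linear independence of u, v and identification of spans
  have hliuv : ∀ γ, LinearIndependent ℂ ![u γ, v γ] := by
    intro γ
    have hcomp : ![u γ, v γ] = (A.symm.toLinearEquiv : H →ₗ[ℂ] H) ∘ ![f γ, g γ] := by
      funext i
      fin_cases i <;> rfl
    rw [hcomp]
    exact (hli γ).map' _ (LinearMap.ker_eq_bot_of_injective A.symm.injective)
  have hVspan : ∀ γ, (V γ : Set H) ⊆ (Submodule.span ℂ (Set.range ![u γ, v γ]) : Set H) := by
    intro γ
    have hle : Submodule.span ℂ (Set.range ![u γ, v γ]) ≤ V γ := by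
      rw [Submodule.span_le]
      rintro y ⟨i, rfl⟩
      fin_cases i
      · exact huV γ
      · exact hvV γ
    haveI := hfdV γ
    have heq : Submodule.span ℂ (Set.range ![u γ, v γ]) = V γ := by
      apply Submodule.eq_of_le_of_finrank_le hle
      rw [hdimV γ, finrank_span_eq_card (hliuv γ)]
      simp
    rw [heq]
  -- density
  have hdense : ⊤ ≤ (Submodule.span ℂ (Set.range (Sum.elim u v))).topologicalClosure := by
    intro x _
    have hQx : ∀ γ, Q γ x ∈ Submodule.span ℂ (Set.range (Sum.elim u v)) := by
      intro γ
      have h1 : Q γ x ∈ Submodule.span ℂ (Set.range ![u γ, v γ]) := hVspan γ (hmemV γ x)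
      refine Submodule.span_mono ?_ h1
      rintro y ⟨i, rfl⟩
      fin_cases i
      · exact ⟨Sum.inl γ, rfl⟩
      · exact ⟨Sum.inr γ, rfl⟩
    have hx := hQsum x
    have : x ∈ closure (Submodule.span ℂ (Set.range (Sum.elim u v)) : Set H) :=
      mem_closure_of_tendsto hx (Filter.Eventually.of_forall fun s =>
        Submodule.sum_mem _ (fun γ _ => hQx γ))
    exact this
  -- quadratic estimates for f, g
  have hfg2 : ∀ γ (c d : ℂ), ‖c • f γ + d • g γ‖^2
      = ‖c‖^2 + ‖d‖^2 + 2 * Complex.re ((starRingEnd ℂ) c * d * ⟪f γ, g γ⟫) := by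
    intro γ c d
    rw [norm_add_sq (𝕜 := ℂ), inner_smul_left, inner_smul_right, norm_smul, norm_smul,
      hf γ, hg γ]
    simp only [RCLike.re_to_complex, ← mul_assoc]
    ring
  have hre : ∀ γ (c d : ℂ), |2 * Complex.re ((starRingEnd ℂ) c * d * ⟪f γ, g γ⟫)|
      ≤ 2 * ‖c‖ * ‖d‖ * κ' := by
    intro γ c d
    rw [abs_mul, abs_two]
    have h1 : |Complex.re ((starRingEnd ℂ) c * d * ⟪f γ, g γ⟫)|
        ≤ ‖(starRingEnd ℂ) c * d * ⟪f γ, g γ⟫‖ := Complex.abs_re_le_norm _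
    have h2 : ‖(starRingEnd ℂ) c * d * ⟪f γ, g γ⟫‖ = ‖c‖ * ‖d‖ * ‖(⟪f γ, g γ⟫ : ℂ)‖ := by
      simp [norm_mul]
    have h3 : ‖c‖ * ‖d‖ * ‖(⟪f γ, g γ⟫ : ℂ)‖ ≤ ‖c‖ * ‖d‖ * κ' := by
      have hb := hbound γ
      have hcd : 0 ≤ ‖c‖ * ‖d‖ := by positivity
      exact mul_le_mul_of_nonneg_left hb hcd
    have h4 := (h1.trans (le_of_eq h2)).trans h3
    nlinarith [abs_nonneg (Complex.re ((starRingEnd ℂ) c * d * ⟪f γ, g γ⟫))]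
  have hupper_fg : ∀ γ (c d : ℂ), ‖c • f γ + d • g γ‖^2 ≤ (1 + κ') * (‖c‖^2 + ‖d‖^2) := by
    intro γ c d
    rw [hfg2]
    have h := abs_le.mp (hre γ c d)
    nlinarith [sq_nonneg (‖c‖ - ‖d‖), norm_nonneg c, norm_nonneg d]
  have hlower_fg : ∀ γ (c d : ℂ), (1 - κ') * (‖c‖^2 + ‖d‖^2) ≤ ‖c • f γ + d • g γ‖^2 := by
    intro γ c d
    rw [hfg2]
    have h := abs_le.mp (hre γ c d)
    nlinarith [sq_nonneg (‖c‖ - ‖d‖), norm_nonneg c, norm_nonneg d]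
  -- transfer estimates to u, v
  set NA : ℝ := ‖(A.symm : H →L[ℂ] H)‖ with hNAdef
  set MA : ℝ := ‖(A : H →L[ℂ] H)‖ with hMAdef
  have key : ∀ γ (c d : ℂ), c • u γ + d • v γ = A.symm (c • f γ + d • g γ) := by
    intro γ c d
    rw [hudef, hvdef]
    simp [map_add, map_smul]
  have hNA0 : 0 ≤ NA := norm_nonneg _
  have hMA0 : 0 ≤ MA := norm_nonneg _
  have hupperuv : ∀ γ (c d : ℂ),
      ‖c • u γ + d • v γ‖^2 ≤ (NA^2 * (1 + κ')) * (‖c‖^2 + ‖d‖^2) := by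
    intro γ c d
    rw [key γ c d]
    have h1 : ‖A.symm (c • f γ + d • g γ)‖ ≤ NA * ‖c • f γ + d • g γ‖ := by
      have := (A.symm : H →L[ℂ] H).le_opNorm (c • f γ + d • g γ)
      simpa using this
    calc ‖A.symm (c • f γ + d • g γ)‖^2 ≤ (NA * ‖c • f γ + d • g γ‖)^2 :=
          pow_le_pow_left₀ (norm_nonneg _) h1 2
      _ = NA^2 * ‖c • f γ + d • g γ‖^2 := by ring
      _ ≤ NA^2 * ((1 + κ') * (‖c‖^2 + ‖d‖^2)) := by
          apply mul_le_mul_of_nonneg_left (hupper_fg γ c d) (by positivity)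
      _ = (NA^2 * (1 + κ')) * (‖c‖^2 + ‖d‖^2) := by ring
  have hloweruv : ∀ γ (c d : ℂ),
      (1 - κ') * (‖c‖^2 + ‖d‖^2) ≤ MA^2 * ‖c • u γ + d • v γ‖^2 := by
    intro γ c d
    have h1 : ‖c • f γ + d • g γ‖ ≤ MA * ‖c • u γ + d • v γ‖ := by
      rw [key γ c d]
      have h2 : c • f γ + d • g γ = A (A.symm (c • f γ + d • g γ)) :=
        (A.apply_symm_apply _).symm
      calc ‖c • f γ + d • g γ‖ = ‖A (A.symm (c • f γ + d • g γ))‖ := by rw [← h2]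
        _ ≤ MA * ‖A.symm (c • f γ + d • g γ)‖ := by
            have := (A : H →L[ℂ] H).le_opNorm (A.symm (c • f γ + d • g γ))
            simpa using this
    calc (1 - κ') * (‖c‖^2 + ‖d‖^2) ≤ ‖c • f γ + d • g γ‖^2 := hlower_fg γ c d
      _ ≤ (MA * ‖c • u γ + d • v γ‖)^2 := pow_le_pow_left₀ (norm_nonneg _) h1 2
      _ = MA^2 * ‖c • u γ + d • v γ‖^2 := by ring
  obtain ⟨Ceq, W, hW⟩ := aux_construct V hfdV hdimV hortho u v huV hvV hdense
    (NA^2 * (1 + κ')) (1 - κ') (MA^2) (by positivity) (by linarith) (by positivity)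
    hupperuv hloweruv
  refine ⟨Ceq.trans A, W, fun i => ?_⟩
  rw [ContinuousLinearEquiv.trans_apply, ← hW i]
  cases i with
  | inl γ =>
    show f γ = A (u γ)
    rw [hudef]
    simp
  | inr γ =>
    show g γ = A (v γ)
    rw [hvdef]
    simp

end Aux

/-- Lemma on splitting a Riesz basis of two-dimensional projections: if `f_γ, g_γ`
are linearly independent unit vectors in `Ran P_γ`, then `{f_γ, g_γ}` is a Riesz
basis of `H` iff `sup_γ |⟨f_γ, g_γ⟩| < 1`. -/
theorem riesz_basis_of_two_dim_projections_iff
    {H : Type*} [NormedAddCommGroup H] [InnerProductSpace ℂ H] [CompleteSpace H]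
    {Γ : Type*} (P : Γ → H →L[ℂ] H)
    (hP : IsRieszBasisOfProjections P)
    (hdim : ∀ γ, Module.finrank ℂ (LinearMap.range (P γ).toLinearMap) = 2)
    (f g : Γ → H)
    (hf : ∀ γ, ‖f γ‖ = 1) (hg : ∀ γ, ‖g γ‖ = 1)
    (hli : ∀ γ, LinearIndependent ℂ ![f γ, g γ])
    (hfr : ∀ γ, f γ ∈ LinearMap.range (P γ).toLinearMap)
    (hgr : ∀ γ, g γ ∈ LinearMap.range (P γ).toLinearMap) :
    IsRieszBasisVectors (Sum.elim f g) ↔ ∃ κ : ℝ, κ < 1 ∧ ∀ γ, ‖(inner ℂ (f γ) (g γ) : ℂ)‖ ≤ κ := by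
  obtain ⟨A, Q, ⟨hQidem, hQzero, hQsum⟩, hQsa, hPAQ⟩ := hP
  constructor
  · exact forward_dir f g hf hg
  · rintro ⟨κ, hκ1, hκb⟩
    exact backward_dir A Q hQidem hQzero hQsum hQsa P hPAQ hdim f g hf hg hli hfr hgr κ hκ1 hκb
end

section
/- Let f and g be linearly independent unit vectors in a two-dimensional Hilbert space E, and let f* , g* be the dual functionals on E (so x = f*(x) f + g*(x) g for all x ∈ E). Then the one-dimensional projection P¹(x) = f*(x) f satisfies ‖P¹‖² ≥ (1 − |⟨f,g⟩|²)⁻¹. -/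
/-- In a two-dimensional complex inner product space `E`, let `f, g` be linearly
independent unit vectors with dual (coordinate) functionals `f*, g*`, so that
`x = f*(x) f + g*(x) g` for all `x`. Then the one-dimensional projection
`P¹ x = f*(x) f` satisfies `‖P¹‖² ≥ (1 − |⟨f,g⟩|²)⁻¹`. -/
theorem norm_sq_coord_projection_ge
    {E : Type*} [NormedAddCommGroup E] [InnerProductSpace ℂ E]
    (hdim : Module.finrank ℂ E = 2)
    (f g : E) (hf : ‖f‖ = 1) (hg : ‖g‖ = 1)
    (hli : LinearIndependent ℂ ![f, g])
    (fstar gstar : E →L[ℂ] ℂ)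
    (hcoord : ∀ x : E, x = fstar x • f + gstar x • g)
    (P1 : E →L[ℂ] E) (hP1 : ∀ x, P1 x = fstar x • f) :
    (1 - ‖(inner ℂ f g : ℂ)‖ ^ 2)⁻¹ ≤ ‖P1‖ ^ 2 := by
  set a : ℂ := inner ℂ f g with ha
  have hpair := LinearIndependent.pair_iff.1 hli
  have hff : fstar f = 1 := by
    have h : (fstar f - 1) • f + gstar f • g = 0 := by
      rw [sub_smul, one_smul, sub_add_eq_add_sub, sub_eq_zero]
      exact (hcoord f).symm
    exact sub_eq_zero.mp (hpair _ _ h).1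
  have hfg : fstar g = 0 := by
    have h : fstar g • f + (gstar g - 1) • g = 0 := by
      rw [sub_smul, one_smul, ← add_sub_assoc, sub_eq_zero]
      exact (hcoord g).symm
    exact (hpair _ _ h).1
  set x : E := f - (starRingEnd ℂ) a • g with hx
  have hnx : ‖x‖ ^ 2 = 1 - ‖a‖ ^ 2 := by
    rw [hx, @norm_sub_sq ℂ, inner_smul_right, RCLike.conj_mul, norm_smul, hf, hg]
    simp only [RCLike.norm_conj]
    ring_nf
    rw [← RCLike.ofReal_pow, RCLike.ofReal_re]
    ring
  have hxne : x ≠ 0 := by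
    intro h0
    have h0' : f = (starRingEnd ℂ) a • g := by
      rw [hx, sub_eq_zero] at h0; exact h0
    have h1 : (1 : ℂ) • f + (-(starRingEnd ℂ) a) • g = 0 := by
      rw [one_smul, neg_smul, h0']; simp
    exact one_ne_zero (hpair _ _ h1).1
  have hpos : 0 < 1 - ‖a‖ ^ 2 := by
    rw [← hnx]
    exact pow_pos (norm_pos_iff.mpr hxne) 2
  have hP1x : ‖P1 x‖ = 1 := by
    rw [hP1, hx]
    simp [hff, hfg, hf]
  have hle : 1 ≤ ‖P1‖ * ‖x‖ := by
    rw [← hP1x]; exact P1.le_opNorm x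
  have h1 : 1 ≤ ‖P1‖ ^ 2 * (1 - ‖a‖ ^ 2) := by
    rw [← hnx]
    calc (1:ℝ) = 1 * 1 := by ring
    _ ≤ (‖P1‖ * ‖x‖) * (‖P1‖ * ‖x‖) :=
        mul_le_mul hle hle zero_le_one (le_trans zero_le_one hle)
    _ = ‖P1‖ ^ 2 * ‖x‖ ^ 2 := by ring
  rw [inv_eq_one_div, div_le_iff₀ hpos]
  linarith
end

section
/- Let L be the Dirac operator with skew-symmetric potential v = [[0, P],[−P̄, 0]]. If λ ∈ ℝ and w = (w₁, w₂) is an eigenvector of L with eigenvalue λ (under Per⁺ or Per⁻ boundary conditions), then (w̄₂, −w̄₁) is also an eigenvector with eigenvalue λ, and it is orthogonal to w in L²([0,π], ℂ²); hence every real eigenvalue of L has geometric multiplicity at least 2. -/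
open Complex

noncomputable def diracL (P Q : ℝ → ℂ) (y : ℝ → ℂ × ℂ) : ℝ → ℂ × ℂ := fun x =>
  (Complex.I * deriv (fun s => (y s).1) x + P x * (y x).2,
   -Complex.I * deriv (fun s => (y s).2) x + Q x * (y x).1)

def diracBC (σ : ℂ) (y : ℝ → ℂ × ℂ) : Prop := y Real.pi = σ • y 0

/-- The antilinear map `(w₁, w₂) ↦ (w̄₂, −w̄₁)` applied pointwise. -/
noncomputable def diracFlip (y : ℝ → ℂ × ℂ) : ℝ → ℂ × ℂ := fun x =>
  ((starRingEnd ℂ) ((y x).2), -(starRingEnd ℂ) ((y x).1))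

lemma deriv_conj' (f : ℝ → ℂ) (hf : Differentiable ℝ f) (x : ℝ) :
    deriv (fun s => (starRingEnd ℂ) (f s)) x = (starRingEnd ℂ) (deriv f x) := by
  have h := (Complex.conjCLE.hasFDerivAt.comp_hasDerivAt x (hf x).hasDerivAt).deriv
  exact h

/-- For the Dirac operator with skew-symmetric potential `v = [[0,P],[−P̄,0]]`:
if `λ ∈ ℝ` and `w` is an eigenvector with eigenvalue `λ` (under `Per±`), then
`(w̄₂, −w̄₁)` is also an eigenvector with eigenvalue `λ`, satisfies the same
boundary condition, and is orthogonal to `w` in `L²([0,π],ℂ²)`; hence every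
real eigenvalue has geometric multiplicity at least 2. -/
theorem skew_symmetric_real_eigenvalue_multiplicity
    (P Q : ℝ → ℂ) (hQ : Q = fun x => -(starRingEnd ℂ) (P x))
    (σ : ℂ) (hσ : σ = 1 ∨ σ = -1)
    (lam : ℂ) (hlam : lam.im = 0)
    (y : ℝ → ℂ × ℂ)
    (hy1 : Differentiable ℝ fun s => (y s).1)
    (hy2 : Differentiable ℝ fun s => (y s).2)
    (hy0 : y ≠ 0)
    (hbc : diracBC σ y)
    (heig : diracL P Q y = fun x => lam • y x) :
    (diracL P Q (diracFlip y) = fun x => lam • diracFlip y x) ∧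
    diracBC σ (diracFlip y) ∧
    (∫ x in (0:ℝ)..Real.pi,
        ((starRingEnd ℂ) ((y x).1) * (diracFlip y x).1 +
         (starRingEnd ℂ) ((y x).2) * (diracFlip y x).2)) = 0 ∧
    LinearIndependent ℂ ![y, diracFlip y] := by
  have hlc : (starRingEnd ℂ) lam = lam := Complex.conj_eq_iff_im.mpr hlam
  have hσc : (starRingEnd ℂ) σ = σ := by rcases hσ with h | h <;> simp [h]
  have h1 : ∀ x, Complex.I * deriv (fun s => (y s).1) x + P x * (y x).2
      = lam * (y x).1 := by
    intro x
    have hx := congrFun heig x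
    have := congrArg Prod.fst hx
    simpa [diracL, Prod.smul_fst, smul_eq_mul] using this
  have h2 : ∀ x, -Complex.I * deriv (fun s => (y s).2) x + Q x * (y x).1
      = lam * (y x).2 := by
    intro x
    have hx := congrFun heig x
    have := congrArg Prod.snd hx
    simpa [diracL, Prod.smul_snd, smul_eq_mul] using this
  refine ⟨?_, ?_, ?_, ?_⟩
  · -- eigen equation for the flip
    funext x
    refine Prod.ext ?_ ?_
    · show Complex.I * deriv (fun s => (diracFlip y s).1) x
        + P x * (diracFlip y x).2 = (lam • diracFlip y x).1
      have hd : deriv (fun s => (starRingEnd ℂ) ((y s).2)) x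
          = (starRingEnd ℂ) (deriv (fun s => (y s).2) x) :=
        deriv_conj' (fun s => (y s).2) hy2 x
      have hc := congrArg (starRingEnd ℂ) (h2 x)
      simp only [map_add, map_mul, map_neg, Complex.conj_I, hQ, hlc, map_neg,
        Complex.conj_conj] at hc
      simp only [diracFlip, Prod.smul_fst, smul_eq_mul, hd]
      linear_combination hc
    · show -Complex.I * deriv (fun s => (diracFlip y s).2) x
        + Q x * (diracFlip y x).1 = (lam • diracFlip y x).2
      have hd : deriv (fun s => -(starRingEnd ℂ) ((y s).1)) x
          = -(starRingEnd ℂ) (deriv (fun s => (y s).1) x) := by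
        rw [deriv.fun_neg, deriv_conj' (fun s => (y s).1) hy1 x]
      have hc := congrArg (starRingEnd ℂ) (h1 x)
      simp only [map_add, map_mul, Complex.conj_I, hlc, Complex.conj_conj] at hc
      simp only [diracFlip, Prod.smul_snd, smul_eq_mul, hd, hQ]
      linear_combination -hc
  · -- boundary condition
    show diracFlip y Real.pi = σ • diracFlip y 0
    have hb := hbc
    unfold diracBC at hb
    refine Prod.ext ?_ ?_
    · simp [diracFlip, hb, Prod.smul_fst, Prod.smul_snd, smul_eq_mul, map_mul, hσc]
    · simp [diracFlip, hb, Prod.smul_fst, Prod.smul_snd, smul_eq_mul, map_mul, hσc]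
  · -- orthogonality
    have hz : ∀ x : ℝ, (starRingEnd ℂ) ((y x).1) * (diracFlip y x).1 +
        (starRingEnd ℂ) ((y x).2) * (diracFlip y x).2 = 0 := by
      intro x; simp [diracFlip]; ring
    simp only [hz]
    exact intervalIntegral.integral_zero
  · -- linear independence
    rw [LinearIndependent.pair_iff]
    intro s t hst
    by_contra hcon
    have hne : s ≠ 0 ∨ t ≠ 0 := by tauto
    have hr : (Complex.normSq s + Complex.normSq t : ℝ) ≠ 0 := by
      have : 0 < Complex.normSq s + Complex.normSq t := by
        rcases hne with h | h
        · have := Complex.normSq_pos.mpr h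
          nlinarith [Complex.normSq_nonneg t]
        · have := Complex.normSq_pos.mpr h
          nlinarith [Complex.normSq_nonneg s]
      linarith
    have hrc : ((Complex.normSq s + Complex.normSq t : ℝ) : ℂ) ≠ 0 := by
      exact_mod_cast hr
    apply hy0
    funext x
    have hx := congrFun hst x
    have e1 : s * (y x).1 + t * (starRingEnd ℂ) ((y x).2) = 0 := by
      have := congrArg Prod.fst hx
      simpa [diracFlip, Prod.smul_fst, smul_eq_mul] using this
    have e2 : s * (y x).2 - t * (starRingEnd ℂ) ((y x).1) = 0 := by
      have := congrArg Prod.snd hx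
      simpa [diracFlip, Prod.smul_snd, smul_eq_mul, sub_eq_add_neg, mul_neg]
        using this
    have e1c := congrArg (starRingEnd ℂ) e1
    have e2c := congrArg (starRingEnd ℂ) e2
    simp only [map_add, map_sub, map_mul, Complex.conj_conj, map_zero] at e1c e2c
    have key1 : ((Complex.normSq s + Complex.normSq t : ℝ) : ℂ) * (y x).1 = 0 := by
      push_cast
      rw [Complex.normSq_eq_conj_mul_self, Complex.normSq_eq_conj_mul_self]
      linear_combination (starRingEnd ℂ) s * e1 - t * e2c
    have key2 : ((Complex.normSq s + Complex.normSq t : ℝ) : ℂ) * (y x).2 = 0 := by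
      push_cast
      rw [Complex.normSq_eq_conj_mul_self, Complex.normSq_eq_conj_mul_self]
      linear_combination (starRingEnd ℂ) s * e2 + t * e1c
    have hy1z : (y x).1 = 0 := by
      have := mul_eq_zero.mp key1
      tauto
    have hy2z : (y x).2 = 0 := by
      have := mul_eq_zero.mp key2
      tauto
    show y x = (0 : ℝ → ℂ × ℂ) x
    simp [Prod.ext_iff, hy1z, hy2z]
end
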